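/- arXiv:0707.0346 — 3 statements merged into one kernel-verified Lean document; each statement's English description precedes it below -/
import Mathlib

section
/- Let (uₙ*) be a sequence of nonnegative, even, radially nonincreasing functions converging to u* in L²(ℝ), with ‖uₙ*‖₂² = λ and sup_n ∫|x||uₙ*(x)|² dx < ∞. Then V(u*) ≤ liminf V(uₙ*), where V(u) = (1/2)∫∫|x-y||u(x)|²|u(y)|² dx dy. -/
open MeasureTheory Filter
open scoped ENNReal

noncomputable section PotentialAux

/-- The potential energy as a lower integral over the product space. -/
private def PP (w : ℝ → ℝ) : ℝ≥0∞ :=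
  ∫⁻ p : ℝ × ℝ, ENNReal.ofReal (|p.1 - p.2| * w p.1 ^ 2 * w p.2 ^ 2)
    ∂((volume : Measure ℝ).prod volume)

private theorem measurable_K {w : ℝ → ℝ} (hw : Measurable w) :
    Measurable fun p : ℝ × ℝ => ENNReal.ofReal (|p.1 - p.2| * w p.1 ^ 2 * w p.2 ^ 2) :=
  ENNReal.measurable_ofReal.comp
    (((measurable_fst.sub measurable_snd).abs.mul ((hw.comp measurable_fst).pow_const 2)).mul
      ((hw.comp measurable_snd).pow_const 2))

private theorem iter_congr {w w' : ℝ → ℝ} (h : w =ᵐ[volume] w') :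
    (∫ x : ℝ, ∫ y : ℝ, |x - y| * w x ^ 2 * w y ^ 2) =
      ∫ x : ℝ, ∫ y : ℝ, |x - y| * w' x ^ 2 * w' y ^ 2 := by
  refine integral_congr_ae ?_
  filter_upwards [h] with x hx
  refine integral_congr_ae ?_
  filter_upwards [h] with y hy
  rw [hx, hy]

/-- Conversion between the iterated Bochner integral and the product lower integral. -/
private theorem conv {w : ℝ → ℝ} (hw : Measurable w) (hfin : PP w ≠ ⊤) :
    (∫ x : ℝ, ∫ y : ℝ, |x - y| * w x ^ 2 * w y ^ 2) = (PP w).toReal := by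
  have hK := measurable_K hw
  have hprod : PP w = ∫⁻ x : ℝ, ∫⁻ y : ℝ, ENNReal.ofReal (|x - y| * w x ^ 2 * w y ^ 2) :=
    lintegral_prod _ hK.aemeasurable
  set H : ℝ → ℝ≥0∞ := fun x => ∫⁻ y : ℝ, ENNReal.ofReal (|x - y| * w x ^ 2 * w y ^ 2) with hH
  have hHmeas : Measurable H := hK.lintegral_prod_right'
  have hHfin : ∀ᵐ x : ℝ, H x < ⊤ := ae_lt_top hHmeas (by rw [← hprod]; exact hfin)
  have hinner : ∀ x : ℝ, (∫ y : ℝ, |x - y| * w x ^ 2 * w y ^ 2) = (H x).toReal := by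
    intro x
    exact integral_eq_lintegral_of_nonneg_ae (Eventually.of_forall fun y => by positivity)
      (((((measurable_const.sub measurable_id).abs.mul measurable_const).mul
        (hw.pow_const 2))).aestronglyMeasurable)
  calc (∫ x : ℝ, ∫ y : ℝ, |x - y| * w x ^ 2 * w y ^ 2) = ∫ x : ℝ, (H x).toReal := by
        simp_rw [hinner]
    _ = (∫⁻ x : ℝ, ENNReal.ofReal ((H x).toReal)).toReal :=
        integral_eq_lintegral_of_nonneg_ae
          (Eventually.of_forall fun x => ENNReal.toReal_nonneg)
          hHmeas.ennreal_toReal.aestronglyMeasurable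
    _ = (∫⁻ x : ℝ, H x).toReal := by
        congr 1
        refine lintegral_congr_ae ?_
        filter_upwards [hHfin] with x hx
        exact ENNReal.ofReal_toReal hx.ne
    _ = (PP w).toReal := by rw [← hprod]

/-- Bound on the potential by mass and first moment. -/
private theorem PP_le {w : ℝ → ℝ} (hw : Measurable w) (hsq : Integrable (fun x => w x ^ 2))
    (hm : Integrable (fun x => |x| * w x ^ 2)) :
    PP w ≤ 2 * (ENNReal.ofReal (∫ x : ℝ, |x| * w x ^ 2) * ENNReal.ofReal (∫ x : ℝ, w x ^ 2)) := by
  have hA : Measurable fun x : ℝ => ENNReal.ofReal (|x| * w x ^ 2) :=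
    ENNReal.measurable_ofReal.comp (measurable_id.abs.mul (hw.pow_const 2))
  have hB : Measurable fun x : ℝ => ENNReal.ofReal (w x ^ 2) :=
    ENNReal.measurable_ofReal.comp (hw.pow_const 2)
  have h1 : ∀ p : ℝ × ℝ, ENNReal.ofReal (|p.1 - p.2| * w p.1 ^ 2 * w p.2 ^ 2) ≤
      ENNReal.ofReal (|p.1| * w p.1 ^ 2) * ENNReal.ofReal (w p.2 ^ 2) +
      ENNReal.ofReal (w p.1 ^ 2) * ENNReal.ofReal (|p.2| * w p.2 ^ 2) := by
    intro p
    rw [← ENNReal.ofReal_mul (by positivity), ← ENNReal.ofReal_mul (by positivity),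
      ← ENNReal.ofReal_add (by positivity) (by positivity)]
    apply ENNReal.ofReal_le_ofReal
    have habs : |p.1 - p.2| ≤ |p.1| + |p.2| := abs_sub p.1 p.2
    nlinarith [mul_le_mul_of_nonneg_right
      (mul_le_mul_of_nonneg_right habs (sq_nonneg (w p.1))) (sq_nonneg (w p.2))]
  calc PP w ≤ ∫⁻ p : ℝ × ℝ,
        (ENNReal.ofReal (|p.1| * w p.1 ^ 2) * ENNReal.ofReal (w p.2 ^ 2) +
          ENNReal.ofReal (w p.1 ^ 2) * ENNReal.ofReal (|p.2| * w p.2 ^ 2))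
        ∂((volume : Measure ℝ).prod volume) := lintegral_mono h1
    _ = (∫⁻ x : ℝ, ENNReal.ofReal (|x| * w x ^ 2)) * (∫⁻ y : ℝ, ENNReal.ofReal (w y ^ 2)) +
        (∫⁻ x : ℝ, ENNReal.ofReal (w x ^ 2)) * (∫⁻ y : ℝ, ENNReal.ofReal (|y| * w y ^ 2)) := by
        rw [lintegral_add_left (show Measurable fun p : ℝ × ℝ =>
            ENNReal.ofReal (|p.1| * w p.1 ^ 2) * ENNReal.ofReal (w p.2 ^ 2) from
            (hA.comp measurable_fst).mul (hB.comp measurable_snd)),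
          lintegral_prod_mul hA.aemeasurable hB.aemeasurable,
          lintegral_prod_mul hB.aemeasurable hA.aemeasurable]
    _ = 2 * (ENNReal.ofReal (∫ x : ℝ, |x| * w x ^ 2) * ENNReal.ofReal (∫ x : ℝ, w x ^ 2)) := by
        rw [← ofReal_integral_eq_lintegral_ofReal hm
            (Eventually.of_forall fun x => by positivity),
          ← ofReal_integral_eq_lintegral_ofReal hsq
            (Eventually.of_forall fun x => by positivity)]
        ring

end PotentialAux

/-- Lower semicontinuity of the potential energy
`V(u) = (1/2)∫∫|x-y||u(x)|²|u(y)|²` along `L²`-convergent sequences of nonnegative,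
even, radially nonincreasing functions with fixed mass and bounded first moments. -/
theorem potential_energy_lower_semicontinuous
    (u : ℕ → ℝ → ℝ) (v : ℝ → ℝ) (lam M : ℝ)
    (hpos : ∀ n x, 0 ≤ u n x) (heven : ∀ n x, u n (-x) = u n x)
    (hdecr : ∀ n, ∀ x y : ℝ, |x| ≤ |y| → u n y ≤ u n x)
    (hmem : ∀ n, MemLp (u n) 2 (volume : Measure ℝ))
    (hvmem : MemLp v 2 (volume : Measure ℝ))
    (hmass : ∀ n, (∫ x : ℝ, u n x ^ 2) = lam)
    (hmom : ∀ n, Integrable (fun x => |x| * u n x ^ 2))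
    (hmombdd : ∀ n, (∫ x : ℝ, |x| * u n x ^ 2) ≤ M)
    (hconv : Tendsto (fun n => ∫ x : ℝ, (u n x - v x) ^ 2) atTop (nhds 0)) :
    (1 / 2) * (∫ x : ℝ, ∫ y : ℝ, |x - y| * v x ^ 2 * v y ^ 2) ≤
      atTop.liminf
        (fun n => (1 / 2) * ∫ x : ℝ, ∫ y : ℝ, |x - y| * u n x ^ 2 * u n y ^ 2) := by
  classical
  -- measurable representatives
  have hum : ∀ n, AEStronglyMeasurable (u n) volume := fun n => (hmem n).1
  set u' : ℕ → ℝ → ℝ := fun n => (hum n).mk (u n) with hu'def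
  set v' : ℝ → ℝ := hvmem.1.mk v with hv'def
  have hu'meas : ∀ n, Measurable (u' n) := fun n => (hum n).measurable_mk
  have hv'meas : Measurable v' := hvmem.1.measurable_mk
  have hueq : ∀ n, u n =ᵐ[volume] u' n := fun n => (hum n).ae_eq_mk
  have hveq : v =ᵐ[volume] v' := hvmem.1.ae_eq_mk
  rw [iter_congr hveq]
  have hRHS : (fun n => (1 / 2 : ℝ) * ∫ x : ℝ, ∫ y : ℝ, |x - y| * u n x ^ 2 * u n y ^ 2) =
      fun n => (1 / 2 : ℝ) * ∫ x : ℝ, ∫ y : ℝ, |x - y| * u' n x ^ 2 * u' n y ^ 2 :=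
    funext fun n => by rw [iter_congr (hueq n)]
  rw [hRHS]
  -- transferred hypotheses
  have hmem' : ∀ n, MemLp (u' n) 2 (volume : Measure ℝ) := fun n => (hmem n).ae_eq (hueq n)
  have hvmem' : MemLp v' 2 (volume : Measure ℝ) := hvmem.ae_eq hveq
  have hsq' : ∀ n, Integrable (fun x => u' n x ^ 2) := fun n => (hmem' n).integrable_sq
  have hmom' : ∀ n, Integrable (fun x => |x| * u' n x ^ 2) := fun n =>
    (hmom n).congr (by filter_upwards [hueq n] with x hx; rw [hx])
  have hmass' : ∀ n, (∫ x : ℝ, u' n x ^ 2) = lam := fun n => by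
    rw [← hmass n]
    exact (integral_congr_ae (by filter_upwards [hueq n] with x hx; rw [hx])).symm
  have hmombdd' : ∀ n, (∫ x : ℝ, |x| * u' n x ^ 2) ≤ M := fun n => by
    rw [show (∫ x : ℝ, |x| * u' n x ^ 2) = ∫ x : ℝ, |x| * u n x ^ 2 from
      integral_congr_ae (by filter_upwards [hueq n] with x hx; rw [hx])]
    exact hmombdd n
  have hM0 : 0 ≤ M := le_trans (integral_nonneg fun x => by positivity) (hmombdd 0)
  have hlam0 : 0 ≤ lam := (hmass 0) ▸ integral_nonneg fun x => by positivity
  -- the potentials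
  set Φ : ℕ → ℝ≥0∞ := fun n => PP (u' n) with hΦdef
  have hΦle : ∀ n, Φ n ≤ ENNReal.ofReal (2 * M * lam) := by
    intro n
    calc Φ n ≤ 2 * (ENNReal.ofReal (∫ x : ℝ, |x| * u' n x ^ 2) *
        ENNReal.ofReal (∫ x : ℝ, u' n x ^ 2)) := PP_le (hu'meas n) (hsq' n) (hmom' n)
      _ ≤ 2 * (ENNReal.ofReal M * ENNReal.ofReal lam) := by
          rw [hmass' n]
          gcongr
          exact hmombdd' n
      _ = ENNReal.ofReal (2 * M * lam) := by
          rw [ENNReal.ofReal_mul (by positivity), ENNReal.ofReal_mul (by norm_num : (0:ℝ) ≤ 2),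
            ENNReal.ofReal_ofNat]
          ring
  have hΦfin : ∀ n, Φ n ≠ ⊤ := fun n => ne_top_of_le_ne_top ENNReal.ofReal_ne_top (hΦle n)
  set a : ℕ → ℝ := fun n => ∫ x : ℝ, ∫ y : ℝ, |x - y| * u' n x ^ 2 * u' n y ^ 2 with hadef
  have ha : ∀ n, a n = (Φ n).toReal := fun n => conv (hu'meas n) (hΦfin n)
  have haΦ : ∀ n, Φ n = ENNReal.ofReal (a n) := fun n => by
    rw [ha n, ENNReal.ofReal_toReal (hΦfin n)]
  have ha0 : ∀ n, 0 ≤ a n := fun n =>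
    integral_nonneg fun x => integral_nonneg fun y => by positivity
  have haM : ∀ n, a n ≤ 2 * M * lam := fun n => by
    rw [ha n]; exact ENNReal.toReal_le_of_le_ofReal (by positivity) (hΦle n)
  -- contradiction setup
  by_contra hcon
  push_neg at hcon
  set B : ℝ := ∫ x : ℝ, ∫ y : ℝ, |x - y| * v' x ^ 2 * v' y ^ 2 with hBdef
  obtain ⟨c, hc1, hc2⟩ := exists_between hcon
  have hbd : IsBoundedUnder (· ≤ ·) atTop (fun n => (1 / 2 : ℝ) * a n) :=
    isBoundedUnder_of ⟨(1 / 2) * (2 * M * lam), fun n => by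
      show (1 / 2 : ℝ) * a n ≤ (1 / 2) * (2 * M * lam)
      linarith [haM n]⟩
  have hfreq : ∃ᶠ n in atTop, (1 / 2 : ℝ) * a n < c :=
    frequently_lt_of_liminf_lt hbd.isCoboundedUnder_ge hc1
  obtain ⟨σ, hσmono, hσ⟩ := extraction_of_frequently_atTop hfreq
  -- L² convergence of representatives
  have hconv' : Tendsto (fun n => ∫ x : ℝ, (u' n x - v' x) ^ 2) atTop (nhds 0) := by
    refine hconv.congr fun n => integral_congr_ae ?_
    filter_upwards [hueq n, hveq] with x h1 h2
    rw [h1, h2]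
  have hrwpt : ∀ r : ℝ, ((‖r‖₊ : ℝ≥0∞)) ^ (2 : ℝ) = ENNReal.ofReal (r ^ 2) := by
    intro r
    rw [show (2 : ℝ) = ((2 : ℕ) : ℝ) by norm_num, ENNReal.rpow_natCast,
      ← ENNReal.ofReal_coe_nnreal, coe_nnnorm, ← ENNReal.ofReal_pow (norm_nonneg r)]
    congr 1
    rw [Real.norm_eq_abs, sq_abs]
  have hrw : ∀ n, eLpNorm (u' n - v') 2 volume =
      (ENNReal.ofReal (∫ x : ℝ, (u' n x - v' x) ^ 2)) ^ (1 / 2 : ℝ) := by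
    intro n
    have hint : Integrable (fun x => (u' n x - v' x) ^ 2) volume := by
      simpa using ((hmem' n).sub hvmem').integrable_sq
    rw [eLpNorm_eq_lintegral_rpow_enorm_toReal (by norm_num) (by norm_num),
      ofReal_integral_eq_lintegral_ofReal hint (Eventually.of_forall fun x => sq_nonneg _)]
    simp only [ENNReal.toReal_ofNat]
    congr 1
    exact lintegral_congr fun x => by rw [Pi.sub_apply]; exact hrwpt _
  have help : Tendsto (fun n => eLpNorm (u' n - v') 2 volume) atTop (nhds 0) := by
    simp only [hrw]
    have h0 : Tendsto (fun n => ENNReal.ofReal (∫ x : ℝ, (u' n x - v' x) ^ 2)) atTop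
        (nhds 0) := by
      have := (ENNReal.continuous_ofReal.tendsto 0).comp hconv'
      simpa [Function.comp_def] using this
    have := ((ENNReal.continuous_rpow_const (y := (1 / 2 : ℝ))).tendsto (0 : ℝ≥0∞)).comp h0
    simpa [Function.comp_def, ENNReal.zero_rpow_of_pos (by norm_num : (0:ℝ) < 1/2)] using this
  -- subsequence converging a.e.
  have htim : TendstoInMeasure volume (fun i => u' (σ i)) atTop v' :=
    tendstoInMeasure_of_tendsto_eLpNorm (by norm_num)
      (fun i => (hu'meas (σ i)).aestronglyMeasurable) hv'meas.aestronglyMeasurable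
      (help.comp hσmono.tendsto_atTop)
  obtain ⟨τ, hτmono, hae⟩ := htim.exists_seq_tendsto_ae
  -- Fatou on the product space
  have h1 : ∀ᵐ p : ℝ × ℝ ∂((volume : Measure ℝ).prod volume),
      Tendsto (fun i => u' (σ (τ i)) p.1) atTop (nhds (v' p.1)) :=
    (Measure.quasiMeasurePreserving_fst (μ := (volume : Measure ℝ))
      (ν := (volume : Measure ℝ))).tendsto_ae.eventually hae
  have h2 : ∀ᵐ p : ℝ × ℝ ∂((volume : Measure ℝ).prod volume),
      Tendsto (fun i => u' (σ (τ i)) p.2) atTop (nhds (v' p.2)) :=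
    (Measure.quasiMeasurePreserving_snd (μ := (volume : Measure ℝ))
      (ν := (volume : Measure ℝ))).tendsto_ae.eventually hae
  have hΨ : PP v' ≤ ENNReal.ofReal (2 * c) := by
    have hfatou := lintegral_liminf_le (μ := (volume : Measure ℝ).prod volume) (u := atTop)
      (f := fun i (p : ℝ × ℝ) =>
        ENNReal.ofReal (|p.1 - p.2| * u' (σ (τ i)) p.1 ^ 2 * u' (σ (τ i)) p.2 ^ 2))
      (fun i => measurable_K (hu'meas (σ (τ i))))
    have heq2 : (∫⁻ p : ℝ × ℝ, atTop.liminf (fun i =>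
        ENNReal.ofReal (|p.1 - p.2| * u' (σ (τ i)) p.1 ^ 2 * u' (σ (τ i)) p.2 ^ 2))
        ∂((volume : Measure ℝ).prod volume)) = PP v' := by
      refine lintegral_congr_ae ?_
      filter_upwards [h1, h2] with p hp1 hp2
      refine Tendsto.liminf_eq ?_
      exact (ENNReal.continuous_ofReal.tendsto _).comp
        ((tendsto_const_nhds.mul (hp1.pow 2)).mul (hp2.pow 2))
    calc PP v' = _ := heq2.symm
      _ ≤ atTop.liminf (fun i => Φ (σ (τ i))) := hfatou
      _ ≤ ENNReal.ofReal (2 * c) := by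
          refine liminf_le_of_frequently_le' (Eventually.frequently (Eventually.of_forall ?_))
          intro i
          rw [haΦ (σ (τ i))]
          refine ENNReal.ofReal_le_ofReal ?_
          have := hσ (τ i)
          linarith
  have hΨfin : PP v' ≠ ⊤ := ne_top_of_le_ne_top ENNReal.ofReal_ne_top hΨ
  have hB : B = (PP v').toReal := conv hv'meas hΨfin
  have h0le : 0 ≤ atTop.liminf (fun n => (1 / 2 : ℝ) * a n) :=
    le_liminf_of_le hbd.isCoboundedUnder_ge
      (Eventually.of_forall fun n => by
        show (0 : ℝ) ≤ (1 / 2 : ℝ) * a n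
        linarith [ha0 n])
  have hc0 : 0 ≤ c := h0le.trans hc1.le
  have hBle : B ≤ 2 * c := by
    rw [hB]
    exact ENNReal.toReal_le_of_le_ofReal (by linarith) hΨ
  linarith
end

section
/- (Uniqueness of positive symmetric ground state) The ODE system -φ'' + γVφ = φ, V'' = φ², with γ > 0, admits at most one solution pair (φ, V) with φ even, φ(x) > 0 for all x, φ'(0) = 0, V(0) = V'(0) = 0, and φ(x) → 0 as |x| → ∞. -/
open Filter

section GroundStateAux

open Set Topology

private lemma contDiff_deriv_of_two {f : ℝ → ℝ} (h : ContDiff ℝ 2 f) :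
    ContDiff ℝ 1 (deriv f) :=
  ((contDiff_succ_iff_deriv (n := 1)).mp (by exact_mod_cast h)).2.2

private lemma refl_deriv2 (f : ℝ → ℝ) (x : ℝ) :
    deriv (deriv (fun x => f (-x))) x = deriv (deriv f) (-x) := by
  have h1 : deriv (fun x => f (-x)) = fun x => -deriv f (-x) := by
    funext y; exact deriv_comp_neg f y
  rw [h1, deriv.fun_neg, deriv_comp_neg (deriv f) x]
  ring

private lemma uniq_fwd (γ : ℝ)
    (φ₁ V₁ φ₂ V₂ : ℝ → ℝ)
    (hφ₁ : ContDiff ℝ 2 φ₁) (hV₁ : ContDiff ℝ 2 V₁)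
    (hφ₂ : ContDiff ℝ 2 φ₂) (hV₂ : ContDiff ℝ 2 V₂)
    (heq₁ : ∀ x, -(deriv (deriv φ₁) x) + γ * V₁ x * φ₁ x = φ₁ x)
    (heqV₁ : ∀ x, deriv (deriv V₁) x = φ₁ x ^ 2)
    (heq₂ : ∀ x, -(deriv (deriv φ₂) x) + γ * V₂ x * φ₂ x = φ₂ x)
    (heqV₂ : ∀ x, deriv (deriv V₂) x = φ₂ x ^ 2)
    (h0 : φ₁ 0 = φ₂ 0) (hd0 : deriv φ₁ 0 = deriv φ₂ 0)
    (hV0 : V₁ 0 = V₂ 0) (hV0' : deriv V₁ 0 = deriv V₂ 0) :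
    ∀ x, 0 ≤ x → φ₁ x = φ₂ x ∧ V₁ x = V₂ x := by
  intro T hT
  set E := ℝ × ℝ × ℝ × ℝ with hE
  set f : E → E := fun p => (p.2.1, (γ * p.2.2.1 - 1) * p.1, p.2.2.2, p.1 ^ 2) with hf
  have hfC : ContDiff ℝ 1 f := by rw [hf]; fun_prop
  set y₁ : ℝ → E := fun t => (φ₁ t, deriv φ₁ t, V₁ t, deriv V₁ t) with hy₁
  set y₂ : ℝ → E := fun t => (φ₂ t, deriv φ₂ t, V₂ t, deriv V₂ t) with hy₂
  have key : ∀ (φ V : ℝ → ℝ), ContDiff ℝ 2 φ → ContDiff ℝ 2 V →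
      (∀ x, -(deriv (deriv φ) x) + γ * V x * φ x = φ x) →
      (∀ x, deriv (deriv V) x = φ x ^ 2) →
      ∀ t, HasDerivAt (fun t => ((φ t, deriv φ t, V t, deriv V t) : E))
        (f (φ t, deriv φ t, V t, deriv V t)) t := by
    intro φ V hφ hV heq heqV t
    have dφ : Differentiable ℝ φ := hφ.differentiable two_ne_zero
    have dφ' : Differentiable ℝ (deriv φ) := (contDiff_deriv_of_two hφ).differentiable one_ne_zero
    have dV : Differentiable ℝ V := hV.differentiable two_ne_zero
    have dV' : Differentiable ℝ (deriv V) := (contDiff_deriv_of_two hV).differentiable one_ne_zero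
    have h1 : HasDerivAt φ (deriv φ t) t := (dφ t).hasDerivAt
    have h2 : HasDerivAt (deriv φ) ((γ * V t - 1) * φ t) t := by
      have h := (dφ' t).hasDerivAt
      have e : deriv (deriv φ) t = (γ * V t - 1) * φ t := by have := heq t; ring_nf; linarith
      rwa [e] at h
    have h3 : HasDerivAt V (deriv V t) t := (dV t).hasDerivAt
    have h4 : HasDerivAt (deriv V) (φ t ^ 2) t := by
      have h := (dV' t).hasDerivAt; rwa [heqV t] at h
    exact h1.prodMk (h2.prodMk (h3.prodMk h4))
  have hder₁ : ∀ t, HasDerivAt y₁ (f (y₁ t)) t := key φ₁ V₁ hφ₁ hV₁ heq₁ heqV₁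
  have hder₂ : ∀ t, HasDerivAt y₂ (f (y₂ t)) t := key φ₂ V₂ hφ₂ hV₂ heq₂ heqV₂
  have hc₁ : Continuous y₁ := continuous_iff_continuousAt.2 fun t => (hder₁ t).continuousAt
  have hc₂ : Continuous y₂ := continuous_iff_continuousAt.2 fun t => (hder₂ t).continuousAt
  obtain ⟨C₁, hC₁⟩ := isCompact_Icc.exists_bound_of_continuousOn
    ((continuous_norm.comp hc₁).continuousOn (s := Icc 0 T))
  obtain ⟨C₂, hC₂⟩ := isCompact_Icc.exists_bound_of_continuousOn
    ((continuous_norm.comp hc₂).continuousOn (s := Icc 0 T))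
  simp only [Function.comp_apply, norm_norm] at hC₁ hC₂
  set R : ℝ := max C₁ C₂ with hR
  have hcont : Continuous (fderiv ℝ f) := hfC.continuous_fderiv one_ne_zero
  obtain ⟨C, hC⟩ := (isCompact_closedBall (0 : E) R).exists_bound_of_continuousOn
    ((continuous_norm.comp hcont).continuousOn)
  simp only [Function.comp_apply, norm_norm] at hC
  set K : NNReal := ⟨max C 0, le_max_right _ _⟩ with hK
  have hlip : LipschitzOnWith K f (Metric.closedBall 0 R) := by
    apply Convex.lipschitzOnWith_of_nnnorm_fderiv_le
      (fun x _ => hfC.differentiable one_ne_zero x) ?_ (convex_closedBall 0 R)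
    intro x hx
    rw [← NNReal.coe_le_coe, coe_nnnorm]
    exact (hC x hx).trans (le_max_left _ _)
  have hmem : ∀ (y : ℝ → E) C, (∀ t ∈ Icc 0 T, ‖y t‖ ≤ C) → C ≤ R →
      ∀ t ∈ Ico 0 T, y t ∈ Metric.closedBall (0 : E) R := by
    intro y C h hCR t ht
    rw [Metric.mem_closedBall, dist_zero_right]
    exact (h t (Ico_subset_Icc_self ht)).trans hCR
  have heqOn : EqOn y₁ y₂ (Icc 0 T) := by
    apply ODE_solution_unique_of_mem_Icc_right (v := fun _ p => f p)
      (s := fun _ => Metric.closedBall (0 : E) R) (K := K) (fun _ _ => hlip)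
      hc₁.continuousOn (fun t _ => (hder₁ t).hasDerivWithinAt)
      (hmem y₁ C₁ (fun t ht => by simpa [Real.norm_eq_abs] using hC₁ t ht) (le_max_left _ _))
      hc₂.continuousOn (fun t _ => (hder₂ t).hasDerivWithinAt)
      (hmem y₂ C₂ (fun t ht => by simpa [Real.norm_eq_abs] using hC₂ t ht) (le_max_right _ _))
    rw [hy₁, hy₂]; simp only [h0, hd0, hV0, hV0']
  have := heqOn ⟨hT, le_rfl⟩
  exact ⟨congrArg (fun p => p.1) this, congrArg (fun p => p.2.2.1) this⟩

private lemma deriv_tendsto (γ : ℝ) (hγ : 0 < γ) (φ V : ℝ → ℝ)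
    (hφ : ContDiff ℝ 2 φ) (hV : ContDiff ℝ 2 V)
    (heq : ∀ x, -(deriv (deriv φ) x) + γ * V x * φ x = φ x)
    (heqV : ∀ x, deriv (deriv V) x = φ x ^ 2)
    (hpos : ∀ x, 0 < φ x) (hV0' : deriv V 0 = 0)
    (hlim : Tendsto φ atTop (nhds 0)) :
    Tendsto (deriv φ) atTop (nhds 0) := by
  have dφ : Differentiable ℝ φ := hφ.differentiable two_ne_zero
  have dφ' : Differentiable ℝ (deriv φ) := (contDiff_deriv_of_two hφ).differentiable one_ne_zero
  have dV : Differentiable ℝ V := hV.differentiable two_ne_zero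
  have dV' : Differentiable ℝ (deriv V) := (contDiff_deriv_of_two hV).differentiable one_ne_zero
  have hφ'' : ∀ x, deriv (deriv φ) x = (γ * V x - 1) * φ x := by
    intro x; have := heq x; ring_nf; linarith
  have hmV : StrictMono (deriv V) := by
    apply strictMono_of_deriv_pos
    intro x; rw [heqV x]; exact pow_pos (hpos x) 2
  have hc : 0 < deriv V 1 := by rw [← hV0']; exact hmV one_pos
  set c := deriv V 1 with hcdef
  have hVlb : ∀ x, 1 ≤ x → V 1 - c + c * x ≤ V x := by
    intro x hx
    have hmono : MonotoneOn (fun x => V x - c * x) (Ici 1) := by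
      apply monotoneOn_of_deriv_nonneg (convex_Ici 1)
        (dV.continuous.sub (continuous_const.mul continuous_id)).continuousOn
        ((dV.sub (differentiable_id.const_mul c)).differentiableOn)
      intro y hy
      rw [interior_Ici] at hy
      have hD : HasDerivAt (fun x => V x - c * x) (deriv V y - c) y := by
        have h1 : HasDerivAt (fun x : ℝ => c * x) c y := by
          simpa using (hasDerivAt_id y).const_mul c
        exact (dV y).hasDerivAt.sub h1
      change 0 ≤ deriv (fun x => V x - c * x) y
      rw [hD.deriv, sub_nonneg]
      exact (hmV hy).le
    have := hmono (self_mem_Ici) hx hx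
    simp only at this
    linarith
  have hVtop : Tendsto V atTop atTop := by
    apply tendsto_atTop_mono' _ _ (tendsto_atTop_add_const_left _ (V 1 - c)
      (tendsto_id.const_mul_atTop hc))
    filter_upwards [eventually_ge_atTop 1] with x hx using hVlb x hx
  have hγV : Tendsto (fun x => γ * V x) atTop atTop := hVtop.const_mul_atTop hγ
  obtain ⟨X, hX⟩ := (eventually_atTop).mp (hγV.eventually_ge_atTop 1)
  have hmono' : MonotoneOn (deriv φ) (Ici X) := by
    apply monotoneOn_of_deriv_nonneg (convex_Ici X) (dφ'.continuous.continuousOn)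
      (dφ'.differentiableOn)
    intro y hy
    rw [interior_Ici] at hy
    rw [hφ'' y]
    have h1 : 1 ≤ γ * V y := hX y hy.le
    nlinarith [hpos y]
  have hnonpos : ∀ x, X ≤ x → deriv φ x ≤ 0 := by
    intro x₀ hx₀
    by_contra hd
    push_neg at hd
    have hgrow : ∀ x, x₀ ≤ x → φ x₀ + deriv φ x₀ * (x - x₀) ≤ φ x := by
      intro x hx
      have hmono2 : MonotoneOn (fun x => φ x - deriv φ x₀ * x) (Ici x₀) := by
        apply monotoneOn_of_deriv_nonneg (convex_Ici x₀)
          (dφ.continuous.sub (continuous_const.mul continuous_id)).continuousOn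
          ((dφ.sub (differentiable_id.const_mul _)).differentiableOn)
        intro y hy
        rw [interior_Ici] at hy
        have hD : HasDerivAt (fun x => φ x - deriv φ x₀ * x) (deriv φ y - deriv φ x₀) y := by
          have h1 : HasDerivAt (fun x : ℝ => deriv φ x₀ * x) (deriv φ x₀) y := by
            simpa using (hasDerivAt_id y).const_mul (deriv φ x₀)
          exact (dφ y).hasDerivAt.sub h1
        change 0 ≤ deriv (fun x => φ x - deriv φ x₀ * x) y
        rw [hD.deriv, sub_nonneg]
        exact hmono' (mem_Ici.mpr hx₀) (mem_Ici.mpr (hx₀.trans hy.le)) hy.le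
      have := hmono2 self_mem_Ici hx hx
      simp only at this
      linarith
    obtain ⟨x, hx1, hx2⟩ := ((hlim.eventually (Iio_mem_nhds (hpos x₀))).and
      (eventually_ge_atTop (x₀ + 1))).exists
    have := hgrow x (by linarith)
    nlinarith
  apply squeeze_zero_norm' (a := fun x => φ (x - 1))
  · filter_upwards [eventually_ge_atTop (X + 1)] with x hx
    obtain ⟨ξ, hξ, hslope⟩ := exists_deriv_eq_slope φ (by linarith : x - 1 < x)
      dφ.continuous.continuousOn dφ.differentiableOn
    have h1 : deriv φ ξ ≤ deriv φ x :=
      hmono' (mem_Ici.mpr (by linarith [hξ.1] : X ≤ ξ)) (mem_Ici.mpr (by linarith)) hξ.2.le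
    have h2 : deriv φ ξ = φ x - φ (x - 1) := by
      rw [hslope]; field_simp; ring
    have h3 : deriv φ x ≤ 0 := hnonpos x (by linarith)
    rw [Real.norm_eq_abs, abs_le]
    constructor
    · have := hpos x; linarith
    · have := hpos (x - 1); linarith
  · exact hlim.comp (tendsto_atTop_add_const_right _ (-1) tendsto_id)

private lemma no_lt (γ : ℝ) (hγ : 0 < γ)
    (φ₁ V₁ φ₂ V₂ : ℝ → ℝ)
    (hφ₁ : ContDiff ℝ 2 φ₁) (hV₁ : ContDiff ℝ 2 V₁)
    (hφ₂ : ContDiff ℝ 2 φ₂) (hV₂ : ContDiff ℝ 2 V₂)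
    (heq₁ : ∀ x, -(deriv (deriv φ₁) x) + γ * V₁ x * φ₁ x = φ₁ x)
    (heqV₁ : ∀ x, deriv (deriv V₁) x = φ₁ x ^ 2)
    (heq₂ : ∀ x, -(deriv (deriv φ₂) x) + γ * V₂ x * φ₂ x = φ₂ x)
    (heqV₂ : ∀ x, deriv (deriv V₂) x = φ₂ x ^ 2)
    (hpos₁ : ∀ x, 0 < φ₁ x) (hpos₂ : ∀ x, 0 < φ₂ x)
    (hd₁ : deriv φ₁ 0 = 0) (hd₂ : deriv φ₂ 0 = 0)
    (hV₁0 : V₁ 0 = 0) (hV₁0' : deriv V₁ 0 = 0)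
    (hV₂0 : V₂ 0 = 0) (hV₂0' : deriv V₂ 0 = 0)
    (hlim₁ : Tendsto φ₁ atTop (nhds 0))
    (hlim₂ : Tendsto φ₂ atTop (nhds 0))
    (hd₁lim : Tendsto (deriv φ₁) atTop (nhds 0))
    (hd₂lim : Tendsto (deriv φ₂) atTop (nhds 0))
    (hlt : φ₁ 0 < φ₂ 0) : False := by
  have dφ₁ : Differentiable ℝ φ₁ := hφ₁.differentiable two_ne_zero
  have dφ₂ : Differentiable ℝ φ₂ := hφ₂.differentiable two_ne_zero
  have dφ₁' : Differentiable ℝ (deriv φ₁) := (contDiff_deriv_of_two hφ₁).differentiable one_ne_zero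
  have dφ₂' : Differentiable ℝ (deriv φ₂) := (contDiff_deriv_of_two hφ₂).differentiable one_ne_zero
  have dV₁ : Differentiable ℝ V₁ := hV₁.differentiable two_ne_zero
  have dV₂ : Differentiable ℝ V₂ := hV₂.differentiable two_ne_zero
  have dV₁' : Differentiable ℝ (deriv V₁) := (contDiff_deriv_of_two hV₁).differentiable one_ne_zero
  have dV₂' : Differentiable ℝ (deriv V₂) := (contDiff_deriv_of_two hV₂).differentiable one_ne_zero
  have hφ₁'' : ∀ x, deriv (deriv φ₁) x = (γ * V₁ x - 1) * φ₁ x := by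
    intro x; have := heq₁ x; ring_nf; linarith
  have hφ₂'' : ∀ x, deriv (deriv φ₂) x = (γ * V₂ x - 1) * φ₂ x := by
    intro x; have := heq₂ x; ring_nf; linarith
  set w : ℝ → ℝ := fun x => deriv φ₂ x * φ₁ x - deriv φ₁ x * φ₂ x with hwdef
  have hw : ∀ x, HasDerivAt w (γ * (V₂ x - V₁ x) * (φ₁ x * φ₂ x)) x := by
    intro x
    have h1 : HasDerivAt (fun x => deriv φ₂ x * φ₁ x)
        (deriv (deriv φ₂) x * φ₁ x + deriv φ₂ x * deriv φ₁ x) x :=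
      ((dφ₂' x).hasDerivAt.mul (dφ₁ x).hasDerivAt)
    have h2 : HasDerivAt (fun x => deriv φ₁ x * φ₂ x)
        (deriv (deriv φ₁) x * φ₂ x + deriv φ₁ x * deriv φ₂ x) x :=
      ((dφ₁' x).hasDerivAt.mul (dφ₂ x).hasDerivAt)
    have h3 := h1.fun_sub h2
    refine h3.congr_deriv ?_
    rw [hφ₁'' x, hφ₂'' x]; ring
  have hw0 : w 0 = 0 := by rw [hwdef]; simp [hd₁, hd₂]
  have claim : ∀ z : ℝ, 0 < z → (∀ x, 0 ≤ x → x < z → φ₁ x < φ₂ x) →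
      StrictMonoOn w (Icc 0 z) := by
    intro z hz hcmp
    have hD : ∀ x ∈ Ioc 0 z, 0 < deriv V₂ x - deriv V₁ x := by
      have hmono : StrictMonoOn (fun x => deriv V₂ x - deriv V₁ x) (Icc 0 z) := by
        apply strictMonoOn_of_deriv_pos (convex_Icc 0 z)
          ((dV₂'.continuous.sub dV₁'.continuous).continuousOn)
        intro x hx
        rw [interior_Icc] at hx
        rw [deriv_sub (dV₂' x) (dV₁' x), heqV₂ x, heqV₁ x]
        have h1 := hpos₁ x
        have h2 := hcmp x hx.1.le hx.2
        nlinarith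
      intro x hx
      have := hmono (left_mem_Icc.mpr hz.le) (mem_Icc.mpr ⟨hx.1.le, hx.2⟩) hx.1
      simp only [hV₁0', hV₂0', sub_zero] at this
      linarith
    have hE : ∀ x ∈ Ioc 0 z, 0 < V₂ x - V₁ x := by
      have hmono : StrictMonoOn (fun x => V₂ x - V₁ x) (Icc 0 z) := by
        apply strictMonoOn_of_deriv_pos (convex_Icc 0 z)
          ((dV₂.continuous.sub dV₁.continuous).continuousOn)
        intro x hx
        rw [interior_Icc] at hx
        rw [deriv_sub (dV₂ x) (dV₁ x)]
        exact hD x ⟨hx.1, hx.2.le⟩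
      intro x hx
      have := hmono (left_mem_Icc.mpr hz.le) (mem_Icc.mpr ⟨hx.1.le, hx.2⟩) hx.1
      simp only [hV₁0, hV₂0, sub_zero] at this
      linarith
    apply strictMonoOn_of_deriv_pos (convex_Icc 0 z)
      (Continuous.continuousOn (by
        exact (dφ₂'.continuous.mul dφ₁.continuous).sub (dφ₁'.continuous.mul dφ₂.continuous)))
    intro x hx
    rw [interior_Icc] at hx
    rw [(hw x).deriv]
    exact mul_pos (mul_pos hγ (hE x ⟨hx.1, hx.2.le⟩)) (mul_pos (hpos₁ x) (hpos₂ x))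
  have hcomp : ∀ x, 0 ≤ x → φ₁ x < φ₂ x := by
    by_contra hcon
    push_neg at hcon
    obtain ⟨xx, hxx0, hxxle⟩ := hcon
    set S : Set ℝ := {x | 0 ≤ x ∧ φ₂ x ≤ φ₁ x} with hSdef
    have hSne : S.Nonempty := ⟨xx, hxx0, hxxle⟩
    have hSclosed : IsClosed S := by
      have : S = Ici 0 ∩ {x | φ₂ x ≤ φ₁ x} := rfl
      rw [this]
      exact isClosed_Ici.inter (isClosed_le dφ₂.continuous dφ₁.continuous)
    have hSbdd : BddBelow S := ⟨0, fun x hx => hx.1⟩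
    set x₀ := sInf S with hx₀def
    have hx₀S : x₀ ∈ S := hSclosed.csInf_mem hSne hSbdd
    have hbefore : ∀ x, 0 ≤ x → x < x₀ → φ₁ x < φ₂ x := by
      intro x hx0 hxlt
      by_contra hcc
      push_neg at hcc
      exact absurd (csInf_le hSbdd (⟨hx0, hcc⟩ : x ∈ S)) (not_le.mpr hxlt)
    have hx₀pos : 0 < x₀ := by
      rcases eq_or_lt_of_le hx₀S.1 with h | h
      · exfalso; have := hx₀S.2; rw [← h] at this; linarith
      · exact h
    have hge : 0 ≤ φ₂ x₀ - φ₁ x₀ := by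
      have htd : Tendsto (fun x => φ₂ x - φ₁ x) (𝓝[<] x₀) (𝓝 (φ₂ x₀ - φ₁ x₀)) :=
        ((dφ₂.continuous.sub dφ₁.continuous).tendsto x₀).mono_left nhdsWithin_le_nhds
      apply ge_of_tendsto htd
      have h1 : ∀ᶠ y in 𝓝[<] x₀, 0 < y :=
        eventually_nhdsWithin_of_eventually_nhds (eventually_gt_nhds hx₀pos)
      filter_upwards [h1, self_mem_nhdsWithin] with y hy1 hy2
      have := hbefore y hy1.le hy2
      linarith
    have heqx₀ : φ₂ x₀ = φ₁ x₀ := le_antisymm hx₀S.2 (by linarith)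
    have hwx₀ : 0 < w x₀ := by
      have := claim x₀ hx₀pos hbefore (left_mem_Icc.mpr hx₀pos.le)
        (right_mem_Icc.mpr hx₀pos.le) hx₀pos
      rwa [hw0] at this
    have hdpos : 0 < deriv φ₂ x₀ - deriv φ₁ x₀ := by
      rw [hwdef] at hwx₀
      simp only [heqx₀] at hwx₀
      nlinarith [hpos₁ x₀]
    have hg : HasDerivAt (fun x => φ₂ x - φ₁ x) (deriv φ₂ x₀ - deriv φ₁ x₀) x₀ :=
      (dφ₂ x₀).hasDerivAt.sub (dφ₁ x₀).hasDerivAt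
    have hslope := hasDerivAt_iff_tendsto_slope.mp hg
    have hev : ∀ᶠ y in 𝓝[≠] x₀, 0 < slope (fun x => φ₂ x - φ₁ x) x₀ y :=
      hslope.eventually (lt_mem_nhds hdpos)
    have hev' : ∀ᶠ y in 𝓝[<] x₀, 0 < slope (fun x => φ₂ x - φ₁ x) x₀ y :=
      hev.filter_mono (nhdsWithin_mono x₀ (fun y hy => ne_of_lt hy))
    have h1 : ∀ᶠ y in 𝓝[<] x₀, 0 < y :=
      eventually_nhdsWithin_of_eventually_nhds (eventually_gt_nhds hx₀pos)
    obtain ⟨y, hy1, hy2, hy3⟩ := (hev'.and (h1.and self_mem_nhdsWithin)).exists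
    rw [slope_def_field] at hy1
    have hgy : 0 < φ₂ y - φ₁ y := by have := hbefore y hy2.le hy3; linarith
    have hx₀y : y - x₀ < 0 := by simpa using sub_neg.mpr hy3
    rw [div_pos_iff] at hy1
    rcases hy1 with ⟨ha, hb⟩ | ⟨ha, hb⟩
    · rw [heqx₀] at ha; linarith
    · linarith
  have hw1 : 0 < w 1 := by
    have := claim 1 one_pos (fun x hx0 hx1 => hcomp x hx0) (left_mem_Icc.mpr zero_le_one)
      (right_mem_Icc.mpr zero_le_one) one_pos
    rwa [hw0] at this
  have hge1 : ∀ x, 1 ≤ x → w 1 ≤ w x := by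
    intro x hx
    rcases eq_or_lt_of_le hx with h | h
    · rw [h]
    · have := claim (x + 1) (by linarith) (fun y hy0 hy1 => hcomp y hy0)
        (mem_Icc.mpr ⟨zero_le_one, by linarith⟩) (mem_Icc.mpr ⟨by linarith, by linarith⟩) h
      exact this.le
  have hwlim : Tendsto w atTop (nhds 0) := by
    have := (hd₂lim.mul hlim₁).sub (hd₁lim.mul hlim₂)
    simpa using this
  obtain ⟨x, hx1, hx2⟩ := ((hwlim.eventually (Iio_mem_nhds hw1)).and (eventually_ge_atTop 1)).exists
  exact absurd (hge1 x hx2) (not_le.mpr hx1)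

end GroundStateAux

/-- Uniqueness of the positive even ground state of the system
`-φ'' + γVφ = φ`, `V'' = φ²` with `V(0) = V'(0) = 0`, `φ'(0) = 0`, `φ > 0`,
`φ → 0` at infinity. -/
theorem ground_state_unique (γ : ℝ) (hγ : 0 < γ)
    (φ₁ V₁ φ₂ V₂ : ℝ → ℝ)
    (hφ₁ : ContDiff ℝ 2 φ₁) (hV₁ : ContDiff ℝ 2 V₁)
    (hφ₂ : ContDiff ℝ 2 φ₂) (hV₂ : ContDiff ℝ 2 V₂)
    (heq₁ : ∀ x, -(deriv (deriv φ₁) x) + γ * V₁ x * φ₁ x = φ₁ x)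
    (heqV₁ : ∀ x, deriv (deriv V₁) x = φ₁ x ^ 2)
    (heq₂ : ∀ x, -(deriv (deriv φ₂) x) + γ * V₂ x * φ₂ x = φ₂ x)
    (heqV₂ : ∀ x, deriv (deriv V₂) x = φ₂ x ^ 2)
    (heven₁ : ∀ x, φ₁ (-x) = φ₁ x) (heven₂ : ∀ x, φ₂ (-x) = φ₂ x)
    (hpos₁ : ∀ x, 0 < φ₁ x) (hpos₂ : ∀ x, 0 < φ₂ x)
    (hd₁ : deriv φ₁ 0 = 0) (hd₂ : deriv φ₂ 0 = 0)
    (hV₁0 : V₁ 0 = 0) (hV₁0' : deriv V₁ 0 = 0)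
    (hV₂0 : V₂ 0 = 0) (hV₂0' : deriv V₂ 0 = 0)
    (hlim₁ : Tendsto φ₁ (cocompact ℝ) (nhds 0))
    (hlim₂ : Tendsto φ₂ (cocompact ℝ) (nhds 0)) :
    φ₁ = φ₂ ∧ V₁ = V₂ := by
  have hatTop : (atTop : Filter ℝ) ≤ cocompact ℝ := by
    rw [cocompact_eq_atBot_atTop]; exact le_sup_right
  have hl₁ : Tendsto φ₁ atTop (nhds 0) := hlim₁.mono_left hatTop
  have hl₂ : Tendsto φ₂ atTop (nhds 0) := hlim₂.mono_left hatTop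
  have hdl₁ := deriv_tendsto γ hγ φ₁ V₁ hφ₁ hV₁ heq₁ heqV₁ hpos₁ hV₁0' hl₁
  have hdl₂ := deriv_tendsto γ hγ φ₂ V₂ hφ₂ hV₂ heq₂ heqV₂ hpos₂ hV₂0' hl₂
  rcases lt_trichotomy (φ₁ 0) (φ₂ 0) with h | h | h
  · exact absurd (no_lt γ hγ φ₁ V₁ φ₂ V₂ hφ₁ hV₁ hφ₂ hV₂ heq₁ heqV₁ heq₂ heqV₂
      hpos₁ hpos₂ hd₁ hd₂ hV₁0 hV₁0' hV₂0 hV₂0' hl₁ hl₂ hdl₁ hdl₂ h) not_false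
  · -- equal initial values: forward and backward uniqueness
    have fwd := uniq_fwd γ φ₁ V₁ φ₂ V₂ hφ₁ hV₁ hφ₂ hV₂ heq₁ heqV₁ heq₂ heqV₂
      h (hd₁.trans hd₂.symm) (hV₁0.trans hV₂0.symm) (hV₁0'.trans hV₂0'.symm)
    -- reflected solutions
    have hneg : ContDiff ℝ 2 (fun x : ℝ => -x) := contDiff_id.neg
    have refl_hyps : ∀ (φ V : ℝ → ℝ), ContDiff ℝ 2 φ → ContDiff ℝ 2 V →
        (∀ x, -(deriv (deriv φ) x) + γ * V x * φ x = φ x) →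
        (∀ x, deriv (deriv V) x = φ x ^ 2) →
        (∀ x, -(deriv (deriv (fun y => φ (-y))) x) +
            γ * (fun y => V (-y)) x * (fun y => φ (-y)) x = (fun y => φ (-y)) x) ∧
        (∀ x, deriv (deriv (fun y => V (-y))) x = (fun y => φ (-y)) x ^ 2) := by
      intro φ V hφ hV heq heqV
      constructor
      · intro x
        simp only [refl_deriv2 φ x]
        exact heq (-x)
      · intro x
        simp only [refl_deriv2 V x]
        exact heqV (-x)
    obtain ⟨heq₁', heqV₁'⟩ := refl_hyps φ₁ V₁ hφ₁ hV₁ heq₁ heqV₁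
    obtain ⟨heq₂', heqV₂'⟩ := refl_hyps φ₂ V₂ hφ₂ hV₂ heq₂ heqV₂
    have hDφ : ∀ (f : ℝ → ℝ) (x : ℝ), deriv (fun y => f (-y)) x = -deriv f (-x) :=
      fun f x => deriv_comp_neg f x
    have bwd := uniq_fwd γ (fun y => φ₁ (-y)) (fun y => V₁ (-y))
      (fun y => φ₂ (-y)) (fun y => V₂ (-y))
      (hφ₁.comp hneg) (hV₁.comp hneg) (hφ₂.comp hneg) (hV₂.comp hneg)
      heq₁' heqV₁' heq₂' heqV₂'
      (by simp only [neg_zero]; exact h)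
      (by rw [hDφ φ₁ 0, hDφ φ₂ 0, neg_zero, hd₁, hd₂])
      (by simp only [neg_zero, hV₁0, hV₂0])
      (by rw [hDφ V₁ 0, hDφ V₂ 0, neg_zero, hV₁0', hV₂0'])
    constructor
    · funext x
      rcases le_total 0 x with hx | hx
      · exact (fwd x hx).1
      · have := (bwd (-x) (by linarith)).1
        simpa using this
    · funext x
      rcases le_total 0 x with hx | hx
      · exact (fwd x hx).2
      · have := (bwd (-x) (by linarith)).2
        simpa using this
  · exact absurd (no_lt γ hγ φ₂ V₂ φ₁ V₁ hφ₂ hV₂ hφ₁ hV₁ heq₂ heqV₂ heq₁ heqV₁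
      hpos₂ hpos₁ hd₂ hd₁ hV₂0 hV₂0' hV₁0 hV₁0' hl₂ hl₁ hdl₂ hdl₁ h) not_false
end

section
/- The Hamiltonian 𝓔(φ, φ', V, V') = φ'² + φ² + (γ/2)V'² - γVφ² is conserved along solutions of the system -φ'' + γVφ = φ, V'' = φ², i.e. its derivative along any C² solution is identically zero. -/
/-- The Hamiltonian `𝓔 = φ'² + φ² + (γ/2)V'² - γVφ²` is conserved along `C²`
solutions of `-φ'' + γVφ = φ`, `V'' = φ²`. -/
theorem hamiltonian_conserved (γ : ℝ) (φ V : ℝ → ℝ)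
    (hφ : ContDiff ℝ 2 φ) (hV : ContDiff ℝ 2 V)
    (heq : ∀ x, -(deriv (deriv φ) x) + γ * V x * φ x = φ x)
    (heqV : ∀ x, deriv (deriv V) x = φ x ^ 2) :
    ∀ x : ℝ,
      deriv (fun t =>
        deriv φ t ^ 2 + φ t ^ 2 + (γ / 2) * deriv V t ^ 2 - γ * V t * φ t ^ 2) x = 0 := by
  intro x
  have hφ2 := contDiff_succ_iff_deriv.mp (show ContDiff ℝ (1+1) φ from hφ)
  have hV2 := contDiff_succ_iff_deriv.mp (show ContDiff ℝ (1+1) V from hV)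
  have hφd : Differentiable ℝ φ := hφ2.1
  have hVd : Differentiable ℝ V := hV2.1
  have hφ'd : Differentiable ℝ (deriv φ) := (hφ2.2.2 : ContDiff ℝ 1 (deriv φ)).differentiable one_ne_zero
  have hV'd : Differentiable ℝ (deriv V) := (hV2.2.2 : ContDiff ℝ 1 (deriv V)).differentiable one_ne_zero
  have Hφ : HasDerivAt φ (deriv φ x) x := (hφd x).hasDerivAt
  have Hφ' : HasDerivAt (deriv φ) (deriv (deriv φ) x) x := (hφ'd x).hasDerivAt
  have HV : HasDerivAt V (deriv V x) x := (hVd x).hasDerivAt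
  have HV' : HasDerivAt (deriv V) (deriv (deriv V) x) x := (hV'd x).hasDerivAt
  have H : HasDerivAt (fun t =>
      deriv φ t ^ 2 + φ t ^ 2 + (γ / 2) * deriv V t ^ 2 - γ * V t * φ t ^ 2)
      (2 * deriv φ x ^ 1 * deriv (deriv φ) x + 2 * φ x ^ 1 * deriv φ x
        + (γ / 2) * (2 * deriv V x ^ 1 * deriv (deriv V) x)
        - (γ * deriv V x * φ x ^ 2 + γ * V x * (2 * φ x ^ 1 * deriv φ x))) x := by
    exact (((Hφ'.pow 2).add (Hφ.pow 2)).add ((HV'.pow 2).const_mul (γ / 2))).sub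
      (((HV.const_mul γ).mul (Hφ.pow 2)))
  rw [H.deriv]
  have e1 : deriv (deriv φ) x = γ * V x * φ x - φ x := by linarith [heq x]
  rw [e1, heqV x]; ring
end
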